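/- arXiv:2312.17361 — 7 statements merged into one kernel-verified Lean document; each statement's English description precedes it below -/
import Mathlib

section
/- With the notation of the Quaternionic Laplacian construction, the matrix H^{ϙ} = A¹_s ⊙ (H⁰ + i H¹) + j (A²_s ⊙ H²) + k (A³_s ⊙ H³) is a Hermitian quaternion matrix, where A¹_s = (A + A^T)/2, A²_s = (U(A) + L(A^T))/2, A³_s = (L(A) + U(A^T))/2. -/
open Matrix Quaternion BigOperators

noncomputable section

namespace QL

variable {n : ℕ}

/-- entrywise topology matrix T = sgn(|A|) -/
def Tm (A : Matrix (Fin n) (Fin n) ℝ) : Matrix (Fin n) (Fin n) ℝ := fun u v => Real.sign |A u v|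
/-- N = sgn(|A - Aᵀ|) -/
def Nm (A : Matrix (Fin n) (Fin n) ℝ) : Matrix (Fin n) (Fin n) ℝ := fun u v => Real.sign |A u v - A v u|
/-- O = T ⊙ Tᵀ -/
def Om (A : Matrix (Fin n) (Fin n) ℝ) : Matrix (Fin n) (Fin n) ℝ := fun u v => Tm A u v * Tm A v u
/-- R = sgn(|A| - |Aᵀ|) -/
def Rm (A : Matrix (Fin n) (Fin n) ℝ) : Matrix (Fin n) (Fin n) ℝ := fun u v => Real.sign (|A u v| - |A v u|)
/-- strict upper-triangular part -/
def Um (M : Matrix (Fin n) (Fin n) ℝ) : Matrix (Fin n) (Fin n) ℝ := fun u v => if u < v then M u v else 0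
/-- strict lower-triangular part -/
def Lm (M : Matrix (Fin n) (Fin n) ℝ) : Matrix (Fin n) (Fin n) ℝ := fun u v => if v < u then M u v else 0

def H0 (A : Matrix (Fin n) (Fin n) ℝ) : Matrix (Fin n) (Fin n) ℝ := fun u v => 1 - Nm A u v
def H1 (A : Matrix (Fin n) (Fin n) ℝ) : Matrix (Fin n) (Fin n) ℝ := fun u v => Rm A u v * (1 - Om A u v)
def H2 (A : Matrix (Fin n) (Fin n) ℝ) : Matrix (Fin n) (Fin n) ℝ :=
  fun u v => Om A u v * Nm A u v * (Um (Tm A) u v - Lm (Tm A)ᵀ u v)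
def H3 (A : Matrix (Fin n) (Fin n) ℝ) : Matrix (Fin n) (Fin n) ℝ := fun u v => - H2 A u v

def A1s (A : Matrix (Fin n) (Fin n) ℝ) : Matrix (Fin n) (Fin n) ℝ := fun u v => (A u v + A v u) / 2
def A2s (A : Matrix (Fin n) (Fin n) ℝ) : Matrix (Fin n) (Fin n) ℝ := fun u v => (Um A u v + Lm Aᵀ u v) / 2
def A3s (A : Matrix (Fin n) (Fin n) ℝ) : Matrix (Fin n) (Fin n) ℝ := fun u v => (Lm A u v + Um Aᵀ u v) / 2

/-- the quaternionic matrix H^ϙ -/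
def Hq (A : Matrix (Fin n) (Fin n) ℝ) : Matrix (Fin n) (Fin n) ℍ[ℝ] :=
  fun u v => ⟨A1s A u v * H0 A u v, A1s A u v * H1 A u v, A2s A u v * H2 A u v, A3s A u v * H3 A u v⟩

/-- D̄ₛ = Diag(|A¹ₛ| e) as a quaternion matrix -/
def Dbar (A : Matrix (Fin n) (Fin n) ℝ) : Matrix (Fin n) (Fin n) ℍ[ℝ] :=
  fun u v => ((if u = v then ∑ w, |A1s A u w| else 0 : ℝ) : ℍ[ℝ])

/-- the Quaternionic Laplacian L^ϙ -/
def Lq (A : Matrix (Fin n) (Fin n) ℝ) : Matrix (Fin n) (Fin n) ℍ[ℝ] := Dbar A - Hq A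

/-- quadratic form x* Q x -/
def quadForm (Q : Matrix (Fin n) (Fin n) ℍ[ℝ]) (x : Fin n → ℍ[ℝ]) : ℍ[ℝ] :=
  ∑ u, ∑ v, star (x u) * Q u v * x v

end QL

namespace QL

lemma Nm_symm (A : Matrix (Fin n) (Fin n) ℝ) (u v : Fin n) : Nm A v u = Nm A u v := by
  simp [Nm, abs_sub_comm]

lemma Om_symm (A : Matrix (Fin n) (Fin n) ℝ) (u v : Fin n) : Om A v u = Om A u v := by
  simp [Om, mul_comm]

lemma Rm_anti (A : Matrix (Fin n) (Fin n) ℝ) (u v : Fin n) : Rm A v u = -Rm A u v := by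
  simp [Rm]
  rw [show |A v u| - |A u v| = -(|A u v| - |A v u|) by ring, Real.sign_neg]

lemma A1s_symm (A : Matrix (Fin n) (Fin n) ℝ) (u v : Fin n) : A1s A v u = A1s A u v := by
  simp [A1s, add_comm]

lemma A2s_symm (A : Matrix (Fin n) (Fin n) ℝ) (u v : Fin n) : A2s A v u = A2s A u v := by
  unfold A2s Um Lm
  rcases lt_trichotomy u v with h | h | h
  · simp [h, not_lt.2 h.le, Matrix.transpose_apply]
  · simp [h]
  · simp [h, not_lt.2 h.le, Matrix.transpose_apply]

lemma A3s_symm (A : Matrix (Fin n) (Fin n) ℝ) (u v : Fin n) : A3s A v u = A3s A u v := by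
  unfold A3s Um Lm
  rcases lt_trichotomy u v with h | h | h
  · simp [h, not_lt.2 h.le, Matrix.transpose_apply]
  · simp [h]
  · simp [h, not_lt.2 h.le, Matrix.transpose_apply]

lemma H2_anti (A : Matrix (Fin n) (Fin n) ℝ) (u v : Fin n) : H2 A v u = -H2 A u v := by
  unfold H2 Um Lm
  rw [Nm_symm, Om_symm]
  rcases lt_trichotomy u v with h | h | h
  · simp [h, not_lt.2 h.le, Matrix.transpose_apply]
  · simp [h]
  · simp [h, not_lt.2 h.le, Matrix.transpose_apply]

end QL

theorem stmt_5 {n : ℕ} (A : Matrix (Fin n) (Fin n) ℝ) :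
    (QL.Hq A)ᴴ = QL.Hq A := by
  apply Matrix.ext
  intro u v
  rw [Matrix.conjTranspose_apply]
  show star (QL.Hq A v u) = QL.Hq A u v
  unfold QL.Hq
  apply QuaternionAlgebra.ext
  · show QL.A1s A v u * QL.H0 A v u + 0 * (QL.A1s A v u * QL.H1 A v u) = QL.A1s A u v * QL.H0 A u v
    rw [zero_mul, add_zero]
    show QL.A1s A v u * QL.H0 A v u = QL.A1s A u v * QL.H0 A u v
    rw [QL.A1s_symm]
    unfold QL.H0
    rw [QL.Nm_symm]
  · show -(QL.A1s A v u * QL.H1 A v u) = QL.A1s A u v * QL.H1 A u v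
    rw [QL.A1s_symm]
    unfold QL.H1
    rw [QL.Rm_anti, QL.Om_symm]
    ring
  · show -(QL.A2s A v u * QL.H2 A v u) = QL.A2s A u v * QL.H2 A u v
    rw [QL.A2s_symm, QL.H2_anti]
    ring
  · show -(QL.A3s A v u * QL.H3 A v u) = QL.A3s A u v * QL.H3 A u v
    rw [QL.A3s_symm]
    unfold QL.H3
    rw [QL.H2_anti]
    ring
end
end

section
/- If A ∈ ℝ^{n×n} is symmetric with nonnegative entries, then the Quaternionic Laplacian L^{ϙ} equals the classical graph Laplacian L = D − A, where D = Diag(A e). -/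
open Matrix Quaternion BigOperators

noncomputable section

theorem stmt_7 {n : ℕ} (A : Matrix (Fin n) (Fin n) ℝ)
    (hsymm : Aᵀ = A) (hnonneg : ∀ u v, 0 ≤ A u v) :
    QL.Lq A = fun u v => (((if u = v then ∑ w, A u w else 0) - A u v : ℝ) : ℍ[ℝ]) := by
  have hs : ∀ u v, A v u = A u v := fun u v => congrFun (congrFun hsymm u) v
  funext u v
  have hN : QL.Nm A u v = 0 := by simp [QL.Nm, hs u v, Real.sign_zero]
  have hR : QL.Rm A u v = 0 := by simp [QL.Rm, hs u v, Real.sign_zero]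
  have hA1 : QL.A1s A u v = A u v := by simp [QL.A1s, hs u v]
  have hA1abs : ∀ w, |QL.A1s A u w| = A u w := by
    intro w
    have : QL.A1s A u w = A u w := by simp [QL.A1s, hs u w]
    rw [this, abs_of_nonneg (hnonneg u w)]
  have hHq : QL.Hq A u v = ((A u v : ℝ) : ℍ[ℝ]) := by
    simp only [QL.Hq, QL.H0, QL.H1, QL.H2, QL.H3, hN, hR, hA1]
    ext <;> simp [Quaternion.coe]
  have hD : QL.Dbar A u v = ((if u = v then ∑ w, A u w else 0 : ℝ) : ℍ[ℝ]) := by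
    simp [QL.Dbar, hA1abs]
  simp only [QL.Lq, Matrix.sub_apply, hHq, hD]
  push_cast
  ring
end
end

section
/- Suppose A ∈ ℝ^{n×n} satisfies, for all u, v: either A_{uv} = 0 or A_{uv} = A_{vu}. Then the Quaternionic Laplacian L^{ϙ} coincides with the Sign-Magnetic Laplacian L^σ, viewed as a quaternion matrix with zero j and k parts; explicitly, Re(L^{ϙ}) = Re(L^σ) and Im₁(L^{ϙ}) = Im(L^σ). -/
open Matrix Quaternion BigOperators

noncomputable section

theorem stmt_9 {n : ℕ} (A : Matrix (Fin n) (Fin n) ℝ)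
    (h : ∀ u v, A u v = 0 ∨ A u v = A v u) :
    ∀ u v,
      (QL.Lq A u v).re =
        (if u = v then ∑ w, |QL.A1s A u w| else 0) - QL.A1s A u v * (1 - QL.Nm A u v) ∧
      (QL.Lq A u v).imI = -(QL.A1s A u v * QL.Rm A u v) ∧
      (QL.Lq A u v).imJ = 0 ∧ (QL.Lq A u v).imK = 0 := by
  intro u v
  rcases h u v with h0 | he
  · have hT : QL.Tm A u v = 0 := by simp [QL.Tm, h0]
    have hOm : QL.Om A u v = 0 := by simp [QL.Om, hT]
    simp only [QL.Lq, Matrix.sub_apply, Quaternion.re_sub, Quaternion.imI_sub, Quaternion.imJ_sub, Quaternion.imK_sub]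
    refine ⟨?_, ?_, ?_, ?_⟩ <;>
      simp [QL.Lq, QL.Dbar, QL.Hq, QL.H0, QL.H1, QL.H2, QL.H3, hOm, Matrix.sub_apply,
        Quaternion.re_sub, Quaternion.imI_sub, Quaternion.imJ_sub, Quaternion.imK_sub]
  · have hN : QL.Nm A u v = 0 := by simp [QL.Nm, he, Real.sign_zero]
    have hR : QL.Rm A u v = 0 := by simp [QL.Rm, he, Real.sign_zero]
    simp only [QL.Lq, Matrix.sub_apply, Quaternion.re_sub, Quaternion.imI_sub, Quaternion.imJ_sub, Quaternion.imK_sub]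
    refine ⟨?_, ?_, ?_, ?_⟩ <;>
      simp [QL.Lq, QL.Dbar, QL.Hq, QL.H0, QL.H1, QL.H2, QL.H3, hN, hR, Matrix.sub_apply,
        Quaternion.re_sub, Quaternion.imI_sub, Quaternion.imJ_sub, Quaternion.imK_sub]
end
end

section
/- For every edge (u,v) with A_{uv} ≠ 0 and A_{vu} = 0, the entry of H^{ϙ} satisfies H^{ϙ}_{uv} = i·(A_{uv}/2) and H^{ϙ}_{vu} = −i·(A_{uv}/2); i.e., a directed edge not contained in a digon is encoded purely in the first imaginary component. -/
open Matrix Quaternion BigOperators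

noncomputable section

theorem stmt_10 {n : ℕ} (A : Matrix (Fin n) (Fin n) ℝ) (u v : Fin n)
    (h1 : A u v ≠ 0) (h2 : A v u = 0) :
    QL.Hq A u v = (⟨0, A u v / 2, 0, 0⟩ : ℍ[ℝ]) ∧
    QL.Hq A v u = (⟨0, -(A u v / 2), 0, 0⟩ : ℍ[ℝ]) := by
  have hpos : 0 < |A u v| := abs_pos.mpr h1
  have hs : Real.sign |A u v| = 1 := Real.sign_of_pos hpos
  have hs0 : Real.sign |A v u| = 0 := by simp [h2]
  have hsneg : Real.sign (-|A u v|) = -1 := Real.sign_of_neg (by linarith)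
  constructor <;>
  · simp only [QL.Hq, QL.A1s, QL.A2s, QL.A3s, QL.H0, QL.H1, QL.H2, QL.H3, QL.Nm, QL.Rm,
      QL.Om, QL.Tm, QL.Um, QL.Lm, Matrix.transpose_apply, h2]
    ext <;> simp [hs, hs0, hsneg, abs_sub_comm (A u v) 0] <;> ring
end
end

section
/- For every asymmetric digon, i.e., indices u < v with A_{uv} ≠ 0, A_{vu} ≠ 0, and A_{uv} ≠ A_{vu}, the entry of H^{ϙ} satisfies H^{ϙ}_{uv} = j·(A_{uv}/2) − k·(A_{vu}/2) and H^{ϙ}_{vu} = −H^{ϙ}_{uv}; in particular both the real and first imaginary components of H^{ϙ}_{uv} vanish. -/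
open Matrix Quaternion BigOperators

noncomputable section

theorem stmt_12 {n : ℕ} (A : Matrix (Fin n) (Fin n) ℝ) (u v : Fin n)
    (huv : u < v) (h1 : A u v ≠ 0) (h2 : A v u ≠ 0) (hne : A u v ≠ A v u) :
    QL.Hq A u v = (⟨0, 0, A u v / 2, -(A v u / 2)⟩ : ℍ[ℝ]) ∧
    QL.Hq A v u = -(QL.Hq A u v) := by

  have hT1 : QL.Tm A u v = 1 := Real.sign_of_pos (abs_pos.mpr h1)
  have hT2 : QL.Tm A v u = 1 := Real.sign_of_pos (abs_pos.mpr h2)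
  have hN1 : QL.Nm A u v = 1 := Real.sign_of_pos (abs_pos.mpr (sub_ne_zero.mpr hne))
  have hN2 : QL.Nm A v u = 1 := Real.sign_of_pos (abs_pos.mpr (sub_ne_zero.mpr (Ne.symm hne)))
  have hO1 : QL.Om A u v = 1 := by simp [QL.Om, hT1, hT2]
  have hO2 : QL.Om A v u = 1 := by simp [QL.Om, hT1, hT2]
  have hvu : ¬ v < u := not_lt_of_gt huv
  constructor
  · ext <;>
      simp [QL.Hq, QL.H0, QL.H1, QL.H2, QL.H3, QL.A1s, QL.A2s, QL.A3s, QL.Um, QL.Lm,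
        Matrix.transpose_apply, hT1, hT2, hN1, hN2, hO1, hO2, huv, hvu]
  · ext <;>
      simp [QL.Hq, QL.H0, QL.H1, QL.H2, QL.H3, QL.A1s, QL.A2s, QL.A3s, QL.Um, QL.Lm,
        Matrix.transpose_apply, hT1, hT2, hN1, hN2, hO1, hO2, huv, hvu] <;>
      change _ = -(_ : ℝ) <;> simp
end
end

section
/- Suppose the real matrix A has no symmetric digons (i.e., A_{uv} = A_{vu} ≠ 0 never holds for u ≠ v). Let H^m = A²_s ⊙ H²₁ + A³_s ⊙ H³₁ regarded as the quaternion matrix j(A²_s ⊙ H²₁) + k(A³_s ⊙ H³₁), where H²₁ = N ⊙ (U(T) − L(T^T)) and H³₁ = −H²₁. Then H⁰ ⊙ A¹_s = 0 off the diagonal and H^{ϙ} = H^σ ⊙ (ee^T − O) + O ⊙ H^m, i.e., off digons H^{ϙ} agrees with the Sign-Magnetic matrix H^σ and on digons it agrees with H^m. -/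
open Matrix Quaternion BigOperators

noncomputable section

theorem stmt_18 {n : ℕ} (A : Matrix (Fin n) (Fin n) ℝ)
    (hdiag : ∀ u, A u u = 0)
    (hnosym : ∀ u v, u ≠ v → ¬(A u v = A v u ∧ A u v ≠ 0)) :
    let H21 : Matrix (Fin n) (Fin n) ℝ :=
      fun u v => QL.Nm A u v * (QL.Um (QL.Tm A) u v - QL.Lm (QL.Tm A)ᵀ u v)
    let Hm : Matrix (Fin n) (Fin n) ℍ[ℝ] :=
      fun u v => ⟨0, 0, QL.A2s A u v * H21 u v, QL.A3s A u v * (-(H21 u v))⟩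
    let Hσ : Matrix (Fin n) (Fin n) ℍ[ℝ] :=
      fun u v => ⟨QL.A1s A u v * (1 - QL.Nm A u v), QL.A1s A u v * QL.Rm A u v, 0, 0⟩
    (∀ u v, u ≠ v → QL.A1s A u v * QL.H0 A u v = 0) ∧
    (∀ u v, QL.Hq A u v =
      ((1 - QL.Om A u v : ℝ) : ℍ[ℝ]) * Hσ u v + ((QL.Om A u v : ℝ) : ℍ[ℝ]) * Hm u v) := by
  intro H21 Hm Hσ
  have key : ∀ u v, u ≠ v → QL.A1s A u v * QL.H0 A u v = 0 := by
    intro u v huv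
    by_cases h : A u v = A v u
    · have h0 : A u v = 0 := by
        by_contra hne
        exact hnosym u v huv ⟨h, hne⟩
      simp [QL.A1s, h0, ← h, h0 ▸ h.symm]
    · have : A u v - A v u ≠ 0 := sub_ne_zero.mpr h
      have : (0:ℝ) < |A u v - A v u| := abs_pos.mpr this
      simp [QL.H0, QL.Nm, Real.sign_of_pos this]
  have keyO : ∀ u v, QL.A1s A u v * QL.H0 A u v * QL.Om A u v = 0 := by
    intro u v
    by_cases huv : u = v
    · subst huv
      simp [QL.Om, QL.Tm, hdiag u]
    · rw [key u v huv]; ring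
  refine ⟨key, fun u v => ?_⟩
  have hO := keyO u v
  ext <;>
    simp only [Quaternion.re_add, Quaternion.imI_add, Quaternion.imJ_add, Quaternion.imK_add,
      Quaternion.re_mul, Quaternion.imI_mul, Quaternion.imJ_mul, Quaternion.imK_mul] <;>
    simp only [QL.Hq, QL.H0, QL.H1, QL.H2, QL.H3, Quaternion.re_add, Quaternion.imI_add,
      Quaternion.imJ_add, Quaternion.imK_add, Quaternion.re_mul, Quaternion.imI_mul,
      Quaternion.imJ_mul, Quaternion.imK_mul, Quaternion.re_coe, Quaternion.imI_coe,
      Quaternion.imJ_coe, Quaternion.imK_coe, Hm, Hσ, H21] <;>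
    ring_nf
  · -- re component
    simp only [QL.H0] at hO
    nlinarith [hO]
end
end

section
/- For any unweighted digraph with adjacency matrix A ∈ {0,1}^{n×n} whose digons are all symmetric (A_{uv} = 1 and A_{vu} = 1 may both hold, but then they have equal weight 1 automatically), the Quaternionic Laplacian L^{ϙ} equals the Magnetic Laplacian L^{(q)} with q = 1/4, viewed as a quaternion matrix with zero j and k components: Re(L^{ϙ}) = Re(L^{(1/4)}) and Im₁(L^{ϙ}) = Im(L^{(1/4)}). -/
open Matrix Quaternion BigOperators

noncomputable section

theorem stmt_19 {n : ℕ} (A : Matrix (Fin n) (Fin n) ℝ)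
    (h01 : ∀ u v, A u v = 0 ∨ A u v = 1) :
    ∀ u v,
      (QL.Lq A u v).re =
        (if u = v then ∑ w, QL.A1s A u w else 0) -
          QL.A1s A u v * Real.cos (2 * Real.pi * (1 / 4) * (A u v - A v u)) ∧
      (QL.Lq A u v).imI =
        -(QL.A1s A u v * Real.sin (2 * Real.pi * (1 / 4) * (A u v - A v u))) ∧
      (QL.Lq A u v).imJ = 0 ∧ (QL.Lq A u v).imK = 0 := by
  intro u v
  have hsum : (∑ w, |(A u w + A w u) / 2|) = ∑ w, (A u w + A w u) / 2 := by
    apply Finset.sum_congr rfl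
    intro w _
    rcases h01 u w with h | h <;> rcases h01 w u with h' | h' <;>
      rw [h, h'] <;> norm_num
  have hpi : 2 * Real.pi * (1 / 4) = Real.pi / 2 := by ring
  simp only [QL.Lq, Matrix.sub_apply, Quaternion.re_sub, Quaternion.imI_sub, Quaternion.imJ_sub,
    Quaternion.imK_sub]
  rcases h01 u v with h | h <;> rcases h01 v u with h' | h' <;>
    simp [QL.Lq, QL.Dbar, QL.Hq, QL.A1s, QL.A2s, QL.A3s, QL.H0, QL.H1, QL.H2, QL.H3,
      QL.Nm, QL.Om, QL.Rm, QL.Tm, QL.Um, QL.Lm, h, h', hsum, hpi, Real.sign,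
      Real.cos_pi_div_two, Real.sin_pi_div_two, Real.sin_neg, Real.cos_neg] <;>
    norm_num [hpi, Real.cos_pi_div_two, Real.sin_pi_div_two]
end
end
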